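/- Let p : ℝ⁴ × ℝ → ℝ be C¹ and positive, V : ℝ⁴ → ℝ⁴ be C¹. If ∂_τ p + ∂_μ(V^μ p) = 0 and moreover ∂_μ (ρ V^μ) = 0 for a positive C¹ function ρ : ℝ⁴ → ℝ, then along any C¹ curve y(τ) with y'(τ) = V(y(τ)): d/dτ ln p(y(τ), τ) = d/dτ ln ρ(y(τ)). -/

import Mathlib

noncomputable section

/-- Spatial partial derivative in direction `μ`. -/
def pd (f : (Fin 4 → ℝ) → ℝ) (μ : Fin 4) (x : Fin 4 → ℝ) : ℝ :=
  fderiv ℝ f x (Pi.single μ 1)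

lemma clm_apply_sum (L : (Fin 4 → ℝ) →L[ℝ] ℝ) (v : Fin 4 → ℝ) :
    L v = ∑ μ, v μ * L (Pi.single μ 1) := by
  have h : v = ∑ μ, v μ • (Pi.single μ 1 : Fin 4 → ℝ) := by
    funext j
    simp [Finset.sum_apply, Pi.single_apply, mul_comm]
  calc L v = L (∑ μ, v μ • (Pi.single μ 1 : Fin 4 → ℝ)) := by rw [← h]
    _ = ∑ μ, v μ * L (Pi.single μ 1) := by
        rw [map_sum]; simp [smul_eq_mul]

lemma pd_mul (f g : (Fin 4 → ℝ) → ℝ) (μ : Fin 4) (x : Fin 4 → ℝ)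
    (hf : DifferentiableAt ℝ f x) (hg : DifferentiableAt ℝ g x) :
    pd (fun z => f z * g z) μ x = pd f μ x * g x + f x * pd g μ x := by
  unfold pd
  rw [fderiv_fun_mul hf hg]
  simp [mul_comm]
  ring

/-- Lagrangian-derivative identity: if `∂_τ p + ∂_μ(V^μ p) = 0` and `∂_μ(ρ V^μ) = 0`,
then along any integral curve of `V`, `d/dτ ln p(y(τ),τ) = d/dτ ln ρ(y(τ))`. -/
theorem lagrangian_log_identity
    (p : (Fin 4 → ℝ) → ℝ → ℝ)
    (hp : ContDiff ℝ 1 (fun q : (Fin 4 → ℝ) × ℝ => p q.1 q.2))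
    (hppos : ∀ x τ, 0 < p x τ)
    (V : (Fin 4 → ℝ) → Fin 4 → ℝ) (hV : ContDiff ℝ 1 V)
    (ρ : (Fin 4 → ℝ) → ℝ) (hρ : ContDiff ℝ 1 ρ) (hρpos : ∀ x, 0 < ρ x)
    (hcont : ∀ x τ, deriv (fun t => p x t) τ + ∑ μ, pd (fun z => V z μ * p z τ) μ x = 0)
    (hdiv : ∀ x, ∑ μ, pd (fun z => ρ z * V z μ) μ x = 0)
    (y : ℝ → Fin 4 → ℝ) (hy : ContDiff ℝ 1 y) (hyV : ∀ τ, deriv y τ = V (y τ)) :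
    ∀ τ, deriv (fun s => Real.log (p (y s) s)) τ
        = deriv (fun s => Real.log (ρ (y s))) τ := by
  intro τ
  set P : (Fin 4 → ℝ) × ℝ → ℝ := fun q => p q.1 q.2 with hP
  have hPd : Differentiable ℝ P := hp.differentiable one_ne_zero
  have hVd : Differentiable ℝ V := hV.differentiable one_ne_zero
  have hρd : Differentiable ℝ ρ := hρ.differentiable one_ne_zero
  have hyd : Differentiable ℝ y := hy.differentiable one_ne_zero
  set x : Fin 4 → ℝ := y τ with hx
  set v : Fin 4 → ℝ := V x with hv
  set Dp : (Fin 4 → ℝ) × ℝ →L[ℝ] ℝ := fderiv ℝ P (x, τ) with hDp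
  -- component differentiability of V
  have hVμ : ∀ (μ : Fin 4) (z : Fin 4 → ℝ), DifferentiableAt ℝ (fun w => V w μ) z := by
    intro μ z
    exact ((ContinuousLinearMap.proj μ : (Fin 4 → ℝ) →L[ℝ] ℝ).differentiableAt).comp z (hVd z)
  -- spatial slice of p
  have hslice : ∀ (σ : ℝ) (z : Fin 4 → ℝ),
      HasFDerivAt (fun w => p w σ)
        (Dp.comp (ContinuousLinearMap.inl ℝ (Fin 4 → ℝ) ℝ)) z → True := fun _ _ _ => trivial
  have hsliceD : ∀ (σ : ℝ) (z : Fin 4 → ℝ), DifferentiableAt ℝ (fun w => p w σ) z := by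
    intro σ z
    have h1 : DifferentiableAt ℝ (fun w : Fin 4 → ℝ => (w, σ)) z :=
      differentiableAt_id.prodMk (differentiableAt_const σ)
    have := (hPd (z, σ)).comp z h1
    exact this
  have hsliceFD : ∀ μ, pd (fun w => p w τ) μ x = Dp (Pi.single μ 1, 0) := by
    intro μ
    have h1 : HasFDerivAt (fun w : Fin 4 → ℝ => (w, τ))
        (ContinuousLinearMap.inl ℝ (Fin 4 → ℝ) ℝ) x := by
      exact (hasFDerivAt_id x).prodMk (hasFDerivAt_const τ x)
    have h2 : HasFDerivAt (fun w => p w τ)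
        (Dp.comp (ContinuousLinearMap.inl ℝ (Fin 4 → ℝ) ℝ)) x :=
      by have := (hPd (x, τ)).hasFDerivAt.comp x h1; exact this
    rw [pd, h2.fderiv]
    simp
  -- time derivative
  have htime : deriv (fun t => p x t) τ = Dp (0, 1) := by
    have h1 : HasDerivAt (fun t : ℝ => (x, t)) ((0 : Fin 4 → ℝ), (1:ℝ)) τ :=
      (hasDerivAt_const τ x).prodMk (hasDerivAt_id τ)
    have h2 : HasDerivAt (fun t => p x t) (Dp (0, 1)) τ :=
      (hPd (x, τ)).hasFDerivAt.comp_hasDerivAt τ h1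
    exact h2.deriv
  -- divergence of V at x
  set dV : ℝ := ∑ μ, pd (fun w => V w μ) μ x with hdV
  -- LHS derivative
  have hyD : HasDerivAt y v τ := by
    have := (hyd τ).hasDerivAt
    rwa [hyV τ, ← hx, ← hv] at this
  have hcurve : HasDerivAt (fun s => p (y s) s) (Dp (v, 1)) τ := by
    have h1 : HasDerivAt (fun s : ℝ => (y s, s)) (v, (1:ℝ)) τ := hyD.prodMk (hasDerivAt_id τ)
    have hPf : HasFDerivAt P Dp ((fun s : ℝ => (y s, s)) τ) := (hPd (x, τ)).hasFDerivAt
    exact hPf.comp_hasDerivAt (f := fun s : ℝ => (y s, s)) τ h1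
  have hploc : p x τ ≠ 0 := (hppos x τ).ne'
  have hlhs : deriv (fun s => Real.log (p (y s) s)) τ = Dp (v, 1) / p x τ :=
    (hcurve.log hploc).deriv
  -- RHS derivative
  have hrcurve : HasDerivAt (fun s => ρ (y s)) (fderiv ℝ ρ x v) τ := by
    have hρf : HasFDerivAt ρ (fderiv ℝ ρ x) (y τ) := (hρd x).hasFDerivAt
    exact hρf.comp_hasDerivAt τ hyD
  have hρloc : ρ x ≠ 0 := (hρpos x).ne'
  have hrhs : deriv (fun s => Real.log (ρ (y s))) τ = fderiv ℝ ρ x v / ρ x :=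
    (hrcurve.log hρloc).deriv
  -- expand continuity equation
  have hsum1 : ∀ μ, pd (fun z => V z μ * p z τ) μ x
      = pd (fun w => V w μ) μ x * p x τ + v μ * Dp (Pi.single μ 1, 0) := by
    intro μ
    rw [pd_mul _ _ _ _ (hVμ μ x) (hsliceD τ x), hsliceFD μ]
  have hDpv : Dp (v, (0:ℝ)) = ∑ μ, v μ * Dp (Pi.single μ 1, 0) := by
    have := clm_apply_sum (Dp.comp (ContinuousLinearMap.inl ℝ (Fin 4 → ℝ) ℝ)) v
    simpa using this
  have hcont' : Dp (0, 1) + (dV * p x τ + Dp (v, 0)) = 0 := by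
    have h := hcont x τ
    rw [htime] at h
    have : (∑ μ, pd (fun z => V z μ * p z τ) μ x)
        = dV * p x τ + Dp (v, 0) := by
      rw [Finset.sum_congr rfl (fun μ _ => hsum1 μ), Finset.sum_add_distrib,
        ← Finset.sum_mul, hDpv]
    linarith [h, this]
  have hDpsplit : Dp (v, 1) = Dp (v, 0) + Dp (0, 1) := by
    rw [← map_add]
    norm_num
  -- expand divergence equation
  have hρslice : ∀ μ, pd ρ μ x = (fderiv ℝ ρ x) (Pi.single μ 1) := fun μ => rfl
  have hgradρ : (fderiv ℝ ρ x) v = ∑ μ, v μ * pd ρ μ x :=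
    clm_apply_sum (fderiv ℝ ρ x) v
  have hdiv' : (fderiv ℝ ρ x) v + ρ x * dV = 0 := by
    have h := hdiv x
    have : (∑ μ, pd (fun z => ρ z * V z μ) μ x)
        = (∑ μ, pd ρ μ x * v μ) + ρ x * dV := by
      rw [Finset.sum_congr rfl (fun μ _ => pd_mul ρ _ μ x (hρd x) (hVμ μ x)),
        Finset.sum_add_distrib, ← Finset.mul_sum]
    rw [this] at h
    rw [hgradρ]
    have : ∑ μ, v μ * pd ρ μ x = ∑ μ, pd ρ μ x * v μ := by
      exact Finset.sum_congr rfl (fun μ _ => mul_comm _ _)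
    linarith [h, this]
  rw [hlhs, hrhs]
  have h1 : Dp (v, 1) = -(dV * p x τ) := by rw [hDpsplit]; linarith
  have h2 : (fderiv ℝ ρ x) v = -(ρ x * dV) := by linarith
  rw [h1, h2]
  field_simp
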